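/- arXiv:2306.03495 — 3 statements merged into one kernel-verified Lean document; each statement's English description precedes it below -/
import Mathlib

section
/- Let p be a prime number, let a_0, a_1, …, a_{n−1} ∈ ℤ_p[[z]], and let u ∈ 1 + zℚ_p[[z]]. If Σ_{i=0}^{n−1} a_i(z)·(δ^i u)(z^p) = u(z) (equivalently, A(u(z^p)) = u for the operator A = a_0 + (a_1/p)·δ + ⋯ + (a_{n−1}/p^{n−1})·δ^{n−1}, since δ^i(u(z^p)) = p^i·(δ^i u)(z^p)), then u ∈ 1 + zℤ_p[[z]]. -/
open PowerSeries

noncomputable section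

/-- The derivation `δ = z d/dz` on power series: `δ(Σ aₙ zⁿ) = Σ n aₙ zⁿ`. -/
def deltaOp {K : Type*} [Semiring K] (f : PowerSeries K) : PowerSeries K :=
  PowerSeries.mk fun k => (k : K) * PowerSeries.coeff k f

/-- Substitution `z ↦ z^m` on power series. -/
def substPow {K : Type*} [Semiring K] (m : ℕ) (f : PowerSeries K) : PowerSeries K :=
  PowerSeries.mk fun k => if k % m = 0 then PowerSeries.coeff (k / m) f else 0

/-- The Cartier operator `Λ_m : Σ aᵢ zⁱ ↦ Σ a_{im} zⁱ`. -/
def cartier {K : Type*} [Semiring K] (m : ℕ) (f : PowerSeries K) : PowerSeries K :=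
  PowerSeries.mk fun k => PowerSeries.coeff (k * m) f

/-- The action of the monic operator `L = δ^n + Σ_{i<n} aᵢ δ^i` on a power series. -/
def applyOp {K : Type*} [Semiring K] {n : ℕ} (a : Fin n → PowerSeries K)
    (y : PowerSeries K) : PowerSeries K :=
  deltaOp^[n] y + ∑ i : Fin n, a i * deltaOp^[(i : ℕ)] y

/-- `L⁽¹⁾ = Σ_{k=1}^{n} k·a_k·δ^{k−1}`, with `a_n = 1`. -/
def applyOp1 {K : Type*} [Semiring K] {n : ℕ} (a : Fin n → PowerSeries K)
    (y : PowerSeries K) : PowerSeries K :=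
  (n : K) • deltaOp^[n - 1] y + ∑ i : Fin n, ((i : ℕ) : K) • (a i * deltaOp^[(i : ℕ) - 1] y)

/-- Companion matrix of the monic operator `δ^n + Σ_{i<n} aᵢ δ^i`. -/
def companionM {K : Type*} [Ring K] {n : ℕ} (a : Fin n → PowerSeries K) :
    Matrix (Fin n) (Fin n) (PowerSeries K) :=
  Matrix.of fun i j =>
    if (i : ℕ) + 1 = n then -a j else if (j : ℕ) = (i : ℕ) + 1 then 1 else 0

/-- Evaluation of a matrix of power series at `z = 0` (entrywise constant term,
viewed again as constant power series). -/
def evalZero {K : Type*} [Semiring K] {n : ℕ} (M : Matrix (Fin n) (Fin n) (PowerSeries K)) :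
    Matrix (Fin n) (Fin n) (PowerSeries K) :=
  M.map fun f => PowerSeries.C (PowerSeries.constantCoeff f)

/-- The sequence `A_0 = I`, `A_{j+1} = δA_j + A_j (A − jI)`. -/
def Aseq {K : Type*} [CommRing K] {n : ℕ} (A : Matrix (Fin n) (Fin n) (PowerSeries K)) :
    ℕ → Matrix (Fin n) (Fin n) (PowerSeries K)
  | 0 => 1
  | j + 1 => (Aseq A j).map deltaOp +
      Aseq A j * (A - (j : K) • (1 : Matrix (Fin n) (Fin n) (PowerSeries K)))

/-- `r(L) ≥ 1`: for every real `0 < r < 1`, `‖A_j/j!‖·r^j → 0` as `j → ∞`,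
where `‖·‖` is the (entrywise supremum of the) Gauss norm. -/
def RadiusGE1 {K : Type*} [NormedField K] {n : ℕ}
    (A : Matrix (Fin n) (Fin n) (PowerSeries K)) : Prop :=
  ∀ r : ℝ, 0 < r → r < 1 → ∀ ε : ℝ, 0 < ε → ∃ J : ℕ, ∀ j : ℕ, J ≤ j →
    ∀ i i' : Fin n, ∀ k : ℕ,
      ‖PowerSeries.coeff k (Aseq A j i i')‖ * ‖((j.factorial : K))⁻¹‖ * r ^ j < ε

/-- A `p`-integral Frobenius structure for the monic operator with coefficients `a`:
a matrix `Φ ∈ Mₙ(ℤ_p[[z]])` with `det Φ ≠ 0` and `δΦ = AΦ − pΦA(z^p)`. -/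
def IsPIntFrob (p : ℕ) [Fact p.Prime] {n : ℕ} (a : Fin n → PowerSeries ℚ_[p])
    (Φ : Matrix (Fin n) (Fin n) (PowerSeries ℚ_[p])) : Prop :=
  (∀ i j : Fin n, ∀ k : ℕ, ‖PowerSeries.coeff k (Φ i j)‖ ≤ 1) ∧
  Φ.det ≠ 0 ∧
  Φ.map deltaOp =
    companionM a * Φ - (p : ℚ_[p]) • (Φ * (companionM a).map (substPow p))

/-- `exp(h) = Σ_j h^j / j!` (intended for `h` with zero constant term). -/
def psExp {K : Type*} [Field K] (h : PowerSeries K) : PowerSeries K :=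
  PowerSeries.mk fun k =>
    ∑ j ∈ Finset.range (k + 1), PowerSeries.coeff k (h ^ j) / (j.factorial : K)

/-- `(f, g)` is the canonical solution pair of the MUM operator with coefficients `a`:
`f ∈ 1 + z K[[z]]`, `g ∈ z K[[z]]`, `L(f) = 0` and `L(g) + L⁽¹⁾(f) = 0`
(equivalently, `f` and `f·Log z + g` are solutions of `L`). -/
def IsCanonicalPair {K : Type*} [Field K] {n : ℕ} (a : Fin n → PowerSeries K)
    (f g : PowerSeries K) : Prop :=
  PowerSeries.constantCoeff f = 1 ∧ PowerSeries.constantCoeff g = 0 ∧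
  applyOp a f = 0 ∧ applyOp a g + applyOp1 a f = 0

end

lemma coeff_deltaOp_iter {K : Type*} [Semiring K] (i : ℕ) (u : PowerSeries K) (k : ℕ) :
    PowerSeries.coeff k (deltaOp^[i] u) = (k : K) ^ i * PowerSeries.coeff k u := by
  induction i with
  | zero => simp
  | succ i ih =>
    rw [Function.iterate_succ_apply']
    simp only [deltaOp, PowerSeries.coeff_mk, ih]
    rw [← mul_assoc, ← pow_succ', pow_succ]

/-- if `u ∈ 1 + zℚ_p[[z]]` satisfies `Σ_i a_i·(δ^i u)(z^p) = u` with
`a_i ∈ ℤ_p[[z]]`, then `u ∈ 1 + zℤ_p[[z]]`. -/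
theorem statement9 (p : ℕ) [Fact p.Prime] (n : ℕ)
    (a : Fin n → PowerSeries ℚ_[p])
    -- the `a_i` lie in `ℤ_p[[z]]`
    (hint : ∀ i, ∀ k : ℕ, ‖PowerSeries.coeff k (a i)‖ ≤ 1)
    (u : PowerSeries ℚ_[p])
    -- `u ∈ 1 + zℚ_p[[z]]`
    (hu0 : PowerSeries.constantCoeff u = 1)
    -- `Σ_{i=0}^{n−1} a_i(z)·(δ^i u)(z^p) = u(z)`
    (heq : ∑ i : Fin n, a i * substPow p (deltaOp^[(i : ℕ)] u) = u) :
    -- `u ∈ 1 + zℤ_p[[z]]`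
    ∀ k : ℕ, ‖PowerSeries.coeff k u‖ ≤ 1 := by
  have hp2 : 2 ≤ p := (Fact.out : p.Prime).two_le
  intro k
  induction k using Nat.strong_induction_on with
  | _ k ih =>
  rcases Nat.eq_zero_or_pos k with rfl | hk
  · simpa [PowerSeries.coeff_zero_eq_constantCoeff, hu0] using le_refl (1:ℝ)
  rw [← heq, map_sum]
  refine IsUltrametricDist.norm_sum_le_of_forall_le_of_nonneg zero_le_one fun i _ ↦ ?_
  rw [PowerSeries.coeff_mul]
  refine IsUltrametricDist.norm_sum_le_of_forall_le_of_nonneg zero_le_one fun x hx ↦ ?_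
  replace hx : x.1 + x.2 = k := Finset.HasAntidiagonal.mem_antidiagonal.mp hx
  have h1 : ‖PowerSeries.coeff x.1 (a i)‖ ≤ 1 := hint i x.1
  have h2 : ‖PowerSeries.coeff x.2 (substPow p (deltaOp^[(i:ℕ)] u))‖ ≤ 1 := by
    simp only [substPow, PowerSeries.coeff_mk]
    split_ifs with h
    · rw [coeff_deltaOp_iter]
      have hlt : x.2 / p < k := by
        calc x.2 / p ≤ k / p := Nat.div_le_div_right (hx ▸ Nat.le_add_left _ _)
        _ ≤ k / 2 := Nat.div_le_div_left hp2 (by omega)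
        _ < k := Nat.div_lt_self hk one_lt_two
      calc ‖((x.2 / p : ℕ) : ℚ_[p]) ^ (i:ℕ) * PowerSeries.coeff (x.2 / p) u‖
          = ‖((x.2 / p : ℕ) : ℚ_[p])‖ ^ (i:ℕ) * ‖PowerSeries.coeff (x.2 / p) u‖ := by
            rw [norm_mul, norm_pow]
        _ ≤ 1 * 1 := by
            refine mul_le_mul ?_ (ih _ hlt) (norm_nonneg _) zero_le_one
            exact pow_le_one₀ (norm_nonneg _)
              (by exact_mod_cast Padic.norm_int_le_one ((x.2 / p : ℕ) : ℤ))
        _ = 1 := one_mul 1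
    · simp
  calc ‖PowerSeries.coeff x.1 (a i) * PowerSeries.coeff x.2 (substPow p (deltaOp^[(i:ℕ)] u))‖
      = ‖PowerSeries.coeff x.1 (a i)‖ * ‖PowerSeries.coeff x.2 (substPow p (deltaOp^[(i:ℕ)] u))‖ := norm_mul _ _
    _ ≤ 1 * 1 := mul_le_mul h1 h2 (norm_nonneg _) zero_le_one
    _ = 1 := one_mul 1
end

section
/- Let p be a prime number and let f ∈ zℚ_p[[z]]. If (1/p)·f(z^p) − f(z) ∈ zℤ_p[[z]], then exp(f(z)) ∈ 1 + zℤ_p[[z]]. -/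
open PowerSeries

noncomputable section
set_option linter.unusedSectionVars false
namespace S13
open Finset

variable {K : Type*} [CommRing K]

variable {K : Type*} [CommRing K]

@[simp] lemma coeff_delta (A : PowerSeries K) (k : ℕ) :
    coeff k (deltaOp A) = (k : K) * coeff k A := by simp [deltaOp]

@[simp] lemma coeff_substPow (m : ℕ) (A : PowerSeries K) (k : ℕ) :
    coeff k (substPow m A) = if k % m = 0 then coeff (k / m) A else 0 := by simp [substPow]

lemma delta_add (A B : PowerSeries K) : deltaOp (A + B) = deltaOp A + deltaOp B := by
  ext k; simp [mul_add]

lemma delta_mul (A B : PowerSeries K) :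
    deltaOp (A * B) = deltaOp A * B + A * deltaOp B := by
  ext k
  simp only [coeff_delta, map_add, coeff_mul, Finset.mul_sum]
  rw [← Finset.sum_add_distrib]
  refine Finset.sum_congr rfl fun x hx => ?_
  rw [Finset.HasAntidiagonal.mem_antidiagonal] at hx
  subst hx
  push_cast
  ring

lemma delta_pow (A : PowerSeries K) (j : ℕ) :
    deltaOp (A ^ (j + 1)) = (j + 1 : ℕ) • (A ^ j * deltaOp A) := by
  induction j with
  | zero => simp [delta_mul, pow_succ]
  | succ j ih =>
      rw [pow_succ, delta_mul, ih, smul_mul_assoc]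
      have : A ^ j * deltaOp A * A = A ^ (j + 1) * deltaOp A := by ring
      rw [this, succ_nsmul, succ_nsmul, succ_nsmul]

lemma coeff_pow_eq_zero {A : PowerSeries K} (h0 : constantCoeff A = 0) :
    ∀ {j k : ℕ}, k < j → coeff k (A ^ j) = 0 := by
  intro j
  induction j with
  | zero => intro k hk; omega
  | succ j ih =>
      intro k hk
      rw [pow_succ, coeff_mul]
      apply Finset.sum_eq_zero
      intro x hx
      rw [Finset.HasAntidiagonal.mem_antidiagonal] at hx
      rcases Nat.eq_zero_or_pos x.2 with h2 | h2
      · rw [h2, coeff_zero_eq_constantCoeff, h0, mul_zero]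
      · rw [ih (by omega), zero_mul]

lemma coeff_mul_low {A B : PowerSeries K} {a b : ℕ}
    (hA : ∀ v < a, coeff v A = 0) (hB : ∀ v < b, coeff v B = 0) :
    ∀ v < a + b, coeff v (A * B) = 0 := by
  intro v hv
  rw [coeff_mul]
  apply Finset.sum_eq_zero
  intro x hx
  rw [Finset.HasAntidiagonal.mem_antidiagonal] at hx
  rcases lt_or_ge x.1 a with h | h
  · rw [hA _ h, zero_mul]
  · rw [hB _ (by omega), mul_zero]

lemma coeff_mul_agree {A A' B B' : PowerSeries K} {n : ℕ}
    (hA : ∀ k < n, coeff k A = coeff k A') (hB : ∀ k < n, coeff k B = coeff k B') :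
    ∀ k < n, coeff k (A * B) = coeff k (A' * B') := by
  intro k hk
  rw [coeff_mul, coeff_mul]
  refine Finset.sum_congr rfl fun x hx => ?_
  rw [Finset.HasAntidiagonal.mem_antidiagonal] at hx
  rw [hA _ (by omega), hB _ (by omega)]

lemma coeff_pow_agree {A A' : PowerSeries K} {n : ℕ}
    (hA : ∀ k < n, coeff k A = coeff k A') (j : ℕ) :
    ∀ k < n, coeff k (A ^ j) = coeff k (A' ^ j) := by
  induction j with
  | zero => simp
  | succ j ih =>
      intro k hk
      rw [pow_succ, pow_succ]
      exact coeff_mul_agree ih hA k hk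



lemma constantCoeff_substPow (m : ℕ) (A : PowerSeries K) :
    constantCoeff (substPow m A) = constantCoeff A := by
  rw [← coeff_zero_eq_constantCoeff_apply, ← coeff_zero_eq_constantCoeff_apply, coeff_substPow]
  simp

lemma substPow_mul {m : ℕ} (hm : 0 < m) (A B : PowerSeries K) :
    substPow m (A * B) = substPow m A * substPow m B := by
  ext k
  rw [coeff_substPow, coeff_mul]
  by_cases hk : k % m = 0
  · have hdvd : m ∣ k := Nat.dvd_of_mod_eq_zero hk
    rw [if_pos hk, coeff_mul]
    have hsub : (antidiagonal (k / m)).image (fun y : ℕ × ℕ => (y.1 * m, y.2 * m)) ⊆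
        antidiagonal k := by
      intro x hx
      simp only [Finset.mem_image] at hx
      obtain ⟨y, hy, rfl⟩ := hx
      rw [Finset.HasAntidiagonal.mem_antidiagonal] at hy ⊢
      rw [← add_mul, hy, Nat.div_mul_cancel hdvd]
    have hzero : ∀ x ∈ antidiagonal k,
        x ∉ (antidiagonal (k / m)).image (fun y : ℕ × ℕ => (y.1 * m, y.2 * m)) →
        coeff x.1 (substPow m A) * coeff x.2 (substPow m B) = 0 := by
      intro x hx hnx
      rw [Finset.HasAntidiagonal.mem_antidiagonal] at hx
      by_cases h1 : x.1 % m = 0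
      · by_cases h2 : x.2 % m = 0
        · exfalso
          apply hnx
          rw [Finset.mem_image]
          obtain ⟨u, hu⟩ := Nat.dvd_of_mod_eq_zero h1
          obtain ⟨v, hv⟩ := Nat.dvd_of_mod_eq_zero h2
          refine ⟨(u, v), ?_, ?_⟩
          · rw [Finset.HasAntidiagonal.mem_antidiagonal]
            have hk2 : k = m * (u + v) := by rw [← hx, hu, hv, Nat.mul_add]
            rw [hk2, Nat.mul_div_cancel_left _ hm]
          · show (u * m, v * m) = x
            rw [Nat.mul_comm u m, Nat.mul_comm v m, ← hu, ← hv]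
        · simp [coeff_substPow, h2]
      · simp [coeff_substPow, h1]
    rw [← Finset.sum_subset hsub hzero, Finset.sum_image]
    · refine Finset.sum_congr rfl fun y hy => ?_
      rw [coeff_substPow, coeff_substPow, if_pos (Nat.mul_mod_left _ _),
        if_pos (Nat.mul_mod_left _ _), Nat.mul_div_cancel _ hm, Nat.mul_div_cancel _ hm]
    · intro a _ b _ hab
      have h1 : a.1 * m = b.1 * m := congrArg Prod.fst hab
      have h2 : a.2 * m = b.2 * m := congrArg Prod.snd hab
      have := Nat.eq_of_mul_eq_mul_right hm h1
      have := Nat.eq_of_mul_eq_mul_right hm h2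
      exact Prod.ext ‹a.1 = b.1› ‹a.2 = b.2›
  · rw [if_neg hk]
    symm
    rw [coeff_mul]
    apply Finset.sum_eq_zero
    intro x hx
    rw [Finset.HasAntidiagonal.mem_antidiagonal] at hx
    by_cases h1 : x.1 % m = 0
    · have h2 : x.2 % m ≠ 0 := by
        intro h2
        apply hk
        rw [← hx, Nat.add_mod, h1, h2]
        simp
      simp [coeff_substPow, h2]
    · simp [coeff_substPow, h1]

lemma delta_substPow (m : ℕ) (A : PowerSeries K) :
    deltaOp (substPow m A) = m • substPow m (deltaOp A) := by
  ext k
  rw [map_nsmul, coeff_delta, coeff_substPow, coeff_substPow]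
  by_cases hk : k % m = 0
  · rw [if_pos hk, if_pos hk, coeff_delta, nsmul_eq_mul]
    have : (k : K) = (m : K) * ((k / m : ℕ) : K) := by
      rw [← Nat.cast_mul, Nat.mul_div_cancel' (Nat.dvd_of_mod_eq_zero hk)]
    rw [this, mul_assoc]
  · rw [if_neg hk, if_neg hk, mul_zero, smul_zero]

lemma substPow_coe_expand {m : ℕ} (hm : 0 < m) (Q : Polynomial K) :
    substPow m (Q : PowerSeries K) = ((Polynomial.expand K m Q : Polynomial K) : PowerSeries K) := by
  ext k
  rw [coeff_substPow, Polynomial.coeff_coe, Polynomial.coeff_coe, Polynomial.coeff_expand hm]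
  by_cases hk : k % m = 0
  · rw [if_pos hk, if_pos (Nat.dvd_of_mod_eq_zero hk)]
  · rw [if_neg hk, if_neg (fun h => hk (Nat.mod_eq_zero_of_dvd h))]

section FieldK
variable {K : Type*} [Field K] [CharZero K]

@[simp] lemma coeff_psExp (A : PowerSeries K) (k : ℕ) :
    coeff k (psExp A) = ∑ j ∈ Finset.range (k + 1), coeff k (A ^ j) / (j.factorial : K) := by
  simp [psExp]

lemma constantCoeff_psExp (A : PowerSeries K) : constantCoeff (psExp A) = 1 := by
  rw [← coeff_zero_eq_constantCoeff_apply, coeff_psExp]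
  simp

lemma delta_psExp {A : PowerSeries K} (h0 : constantCoeff A = 0) :
    deltaOp (psExp A) = deltaOp A * psExp A := by
  ext k
  have hS : coeff k (deltaOp (psExp A)) =
      ∑ j ∈ Finset.range k, coeff k (deltaOp A * A ^ j) / (j.factorial : K) := by
    rw [coeff_delta, coeff_psExp, Finset.mul_sum]
    have step : ∀ j ∈ Finset.range (k + 1),
        (k : K) * (coeff k (A ^ j) / (j.factorial : K)) =
        coeff k (deltaOp (A ^ j)) / (j.factorial : K) := by
      intro j _
      rw [coeff_delta, mul_div_assoc]
    rw [Finset.sum_congr rfl step, Finset.sum_range_succ']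
    have h00 : coeff k (deltaOp (A ^ 0)) / ((Nat.factorial 0 : ℕ) : K) = 0 := by
      rcases eq_or_ne k 0 with rfl | hk
      · simp
      · simp [coeff_one, hk]
    rw [h00, add_zero]
    refine Finset.sum_congr rfl fun j _ => ?_
    rw [delta_pow, map_nsmul, nsmul_eq_mul, Nat.factorial_succ]
    push_cast
    rw [mul_comm (A ^ j) (deltaOp A)]
    have hj : ((j : K) + 1) ≠ 0 := by exact_mod_cast Nat.succ_ne_zero j
    have hjf : ((j.factorial : ℕ) : K) ≠ 0 := Nat.cast_ne_zero.mpr (Nat.factorial_ne_zero j)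
    field_simp
  rw [hS, coeff_mul]
  have hinner : ∀ x ∈ antidiagonal k,
      coeff x.1 (deltaOp A) * coeff x.2 (psExp A) =
      ∑ m ∈ Finset.range (k + 1), coeff x.1 (deltaOp A) * (coeff x.2 (A ^ m) / (m.factorial : K)) := by
    intro x hx
    rw [Finset.HasAntidiagonal.mem_antidiagonal] at hx
    rw [coeff_psExp, Finset.mul_sum]
    apply Finset.sum_subset
    · exact Finset.range_subset_range.mpr (by omega)
    · intro m _ hm
      rw [Finset.mem_range, not_lt] at hm
      rw [coeff_pow_eq_zero h0 (by omega), zero_div, mul_zero]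
  rw [Finset.sum_congr rfl hinner, Finset.sum_comm]
  have houter : ∀ m ∈ Finset.range (k + 1),
      ∑ x ∈ antidiagonal k, coeff x.1 (deltaOp A) * (coeff x.2 (A ^ m) / (m.factorial : K)) =
      coeff k (deltaOp A * A ^ m) / (m.factorial : K) := by
    intro m _
    rw [coeff_mul, Finset.sum_div]
    exact Finset.sum_congr rfl fun x _ => (mul_div_assoc _ _ _).symm
  rw [Finset.sum_congr rfl houter, Finset.sum_range_succ]
  have hlast : coeff k (deltaOp A * A ^ k) = 0 := by
    rw [coeff_mul]
    apply Finset.sum_eq_zero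
    intro x hx
    rw [Finset.HasAntidiagonal.mem_antidiagonal] at hx
    rcases lt_or_ge x.2 k with h | h
    · rw [coeff_pow_eq_zero h0 h, mul_zero]
    · have hx1 : x.1 = 0 := by omega
      rw [hx1, coeff_delta]
      simp
  rw [hlast, zero_div, add_zero]

lemma ode_unique {C F G : PowerSeries K} (hC : constantCoeff C = 0)
    (h0 : constantCoeff F = constantCoeff G)
    (hF : deltaOp F = C * F) (hG : deltaOp G = C * G) : F = G := by
  ext k
  induction k using Nat.strong_induction_on with
  | _ k ih =>
    rcases eq_or_ne k 0 with rfl | hk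
    · rw [coeff_zero_eq_constantCoeff_apply, coeff_zero_eq_constantCoeff_apply]; exact h0
    · have hFk := congrArg (coeff k) hF
      have hGk := congrArg (coeff k) hG
      rw [coeff_delta, coeff_mul] at hFk hGk
      have hsum : ∑ x ∈ antidiagonal k, coeff x.1 C * coeff x.2 F =
          ∑ x ∈ antidiagonal k, coeff x.1 C * coeff x.2 G := by
        refine Finset.sum_congr rfl fun x hx => ?_
        rw [Finset.HasAntidiagonal.mem_antidiagonal] at hx
        rcases lt_or_ge x.2 k with h | h
        · rw [ih x.2 h]
        · have hx1 : x.1 = 0 := by omega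
          have hx2 : x.2 = k := by omega
          rw [hx1, coeff_zero_eq_constantCoeff_apply, hC, zero_mul, zero_mul]
      have : (k : K) * coeff k F = (k : K) * coeff k G := by rw [hFk, hGk, hsum]
      exact mul_left_cancel₀ (Nat.cast_ne_zero.mpr hk) this

lemma psExp_add {A B : PowerSeries K} (hA : constantCoeff A = 0)
    (hB : constantCoeff B = 0) : psExp (A + B) = psExp A * psExp B := by
  have hAB : constantCoeff (A + B) = 0 := by rw [map_add, hA, hB, add_zero]
  refine ode_unique (C := deltaOp (A + B)) ?_ ?_ (delta_psExp hAB) ?_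
  · rw [← coeff_zero_eq_constantCoeff_apply, coeff_delta]; simp
  · rw [constantCoeff_psExp, map_mul, constantCoeff_psExp, constantCoeff_psExp, mul_one]
  · rw [delta_mul, delta_psExp hA, delta_psExp hB, delta_add]
    ring

lemma psExp_zero : psExp (0 : PowerSeries K) = 1 := by
  ext k
  rw [coeff_psExp, Finset.sum_range_succ']
  have : ∀ j ∈ Finset.range k, coeff k ((0 : PowerSeries K) ^ (j + 1)) / ((j+1).factorial : K) = 0 := by
    intro j _
    rw [zero_pow (Nat.succ_ne_zero j), map_zero, zero_div]
  rw [Finset.sum_congr rfl this, Finset.sum_const_zero, zero_add]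
  simp

lemma psExp_nsmul {A : PowerSeries K} (hA : constantCoeff A = 0) (j : ℕ) :
    psExp (j • A) = psExp A ^ j := by
  induction j with
  | zero => simp [psExp_zero]
  | succ j ih =>
      have hjA : constantCoeff (j • A) = 0 := by rw [map_nsmul, hA, smul_zero]
      rw [succ_nsmul, psExp_add hjA hA, ih, pow_succ]

lemma psExp_substPow {m : ℕ} (hm : 0 < m) {A : PowerSeries K}
    (hA : constantCoeff A = 0) : psExp (substPow m A) = substPow m (psExp A) := by
  have hsA : constantCoeff (substPow m A) = 0 := by rw [constantCoeff_substPow, hA]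
  refine ode_unique (C := deltaOp (substPow m A)) ?_ ?_ (delta_psExp hsA) ?_
  · rw [← coeff_zero_eq_constantCoeff_apply, coeff_delta]; simp
  · rw [constantCoeff_psExp, constantCoeff_substPow, constantCoeff_psExp]
  · rw [delta_substPow, delta_substPow, delta_psExp hA, substPow_mul hm, smul_mul_assoc]

end FieldK

section Padic
variable {p : ℕ} [hp : Fact p.Prime]

lemma norm_coeff_mul_le {A B : PowerSeries ℚ_[p]} {ca cb : ℝ} (hca : 0 ≤ ca) (hcb : 0 ≤ cb)
    (hA : ∀ k, ‖coeff k A‖ ≤ ca) (hB : ∀ k, ‖coeff k B‖ ≤ cb) (k : ℕ) :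
    ‖coeff k (A * B)‖ ≤ ca * cb := by
  rw [coeff_mul]
  refine IsUltrametricDist.norm_sum_le_of_forall_le_of_nonneg (mul_nonneg hca hcb) fun i _ => ?_
  rw [norm_mul]
  exact mul_le_mul (hA _) (hB _) (norm_nonneg _) hca

lemma int_one : ∀ k, ‖coeff k (1 : PowerSeries ℚ_[p])‖ ≤ 1 := by
  intro k
  rw [coeff_one]
  split <;> simp

lemma int_pow {A : PowerSeries ℚ_[p]} (hA : ∀ k, ‖coeff k A‖ ≤ 1) (j : ℕ) :
    ∀ k, ‖coeff k (A ^ j)‖ ≤ 1 := by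
  induction j with
  | zero => simpa using int_one
  | succ j ih =>
      intro k
      rw [pow_succ]
      simpa using norm_coeff_mul_le zero_le_one zero_le_one ih hA k

lemma ofDigits_zero_of_all_zero {l : List ℕ} (h : ∀ x ∈ l, x = 0) (b : ℕ) :
    Nat.ofDigits b l = 0 := by
  induction l with
  | nil => simp
  | cons a l ih =>
      rw [Nat.ofDigits_cons, h a (by simp), ih (fun x hx => h x (by simp [hx]))]
      simp

lemma padicValNat_factorial_le {j : ℕ} (hj : 1 ≤ j) :
    padicValNat p (j.factorial) ≤ j - 1 := by
  have hleg := sub_one_mul_padicValNat_factorial (p := p) j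
  have hs : 1 ≤ (p.digits j).sum := by
    by_contra hcon
    push_neg at hcon
    have hs0 : (p.digits j).sum = 0 := by omega
    have hall : ∀ x ∈ p.digits j, x = 0 := by
      intro x hx
      have hle := List.single_le_sum (fun y (_ : y ∈ p.digits j) => Nat.zero_le y) x hx
      omega
    have hj0 := Nat.ofDigits_digits p j
    rw [ofDigits_zero_of_all_zero hall p] at hj0
    omega
  calc padicValNat p (j.factorial) ≤ (p - 1) * padicValNat p (j.factorial) :=
        Nat.le_mul_of_pos_left _ (by have := hp.out.two_le; omega)
    _ = j - (p.digits j).sum := hleg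
    _ ≤ j - 1 := by omega

lemma norm_pow_div_factorial_le {j : ℕ} (hj : 1 ≤ j) :
    ‖(p : ℚ_[p]) ^ j * ((j.factorial : ℚ_[p]))⁻¹‖ ≤ (p : ℝ)⁻¹ := by
  have hfact : ((j.factorial : ℚ_[p])) ≠ 0 := Nat.cast_ne_zero.mpr (Nat.factorial_ne_zero j)
  have hp0 : (0 : ℝ) < (p : ℝ) := by exact_mod_cast hp.out.pos
  have hp1 : (1 : ℝ) < (p : ℝ) := by exact_mod_cast hp.out.one_lt
  rw [norm_mul, norm_pow, Padic.norm_p, norm_inv, Padic.norm_eq_zpow_neg_valuation hfact,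
    Padic.valuation_natCast]
  set v := padicValNat p (j.factorial) with hv
  have hvle : v ≤ j - 1 := padicValNat_factorial_le hj
  have e1 : ((p : ℝ)⁻¹) ^ j = (p : ℝ) ^ (-(j : ℤ)) := by
    rw [inv_pow, ← zpow_natCast, ← zpow_neg]
  have e2 : (((p : ℝ)) ^ (-(v : ℤ)))⁻¹ = (p : ℝ) ^ (v : ℤ) := by
    rw [← zpow_neg, neg_neg]
  rw [e1, e2, ← zpow_add₀ (ne_of_gt hp0)]
  have hle : (-(j : ℤ) + (v : ℤ)) ≤ -1 := by omega
  calc (p : ℝ) ^ (-(j : ℤ) + (v : ℤ)) ≤ (p : ℝ) ^ (-1 : ℤ) :=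
        zpow_le_zpow_right₀ hp1.le hle
    _ = (p : ℝ)⁻¹ := by rw [zpow_neg_one]

lemma frob_poly (Q : Polynomial ℤ_[p]) (k : ℕ) :
    ‖(Q ^ p - Polynomial.expand ℤ_[p] p Q).coeff k‖ ≤ (p : ℝ)⁻¹ := by
  have hchar : Polynomial.expand (ZMod p) p (Q.map PadicInt.toZMod) = (Q.map PadicInt.toZMod) ^ p := by
    have h := Polynomial.map_frobenius_expand p (Q.map (PadicInt.toZMod (p := p)))
    rwa [ZMod.frobenius_zmod, Polynomial.map_id] at h
  have hmap : (Q ^ p - Polynomial.expand ℤ_[p] p Q).map PadicInt.toZMod = 0 := by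
    rw [Polynomial.map_sub, Polynomial.map_pow, Polynomial.map_expand, hchar, sub_self]
  have hcoeff : PadicInt.toZMod ((Q ^ p - Polynomial.expand ℤ_[p] p Q).coeff k) = 0 := by
    rw [← Polynomial.coeff_map, hmap, Polynomial.coeff_zero]
  have hdvd : (p : ℤ_[p]) ∣ (Q ^ p - Polynomial.expand ℤ_[p] p Q).coeff k := by
    rw [← PadicInt.norm_lt_one_iff_dvd]
    have hker : (Q ^ p - Polynomial.expand ℤ_[p] p Q).coeff k ∈ RingHom.ker (PadicInt.toZMod (p := p)) := hcoeff
    rw [PadicInt.ker_toZMod] at hker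
    exact PadicInt.mem_nonunits.mp ((IsLocalRing.mem_maximalIdeal _).mp hker)
  obtain ⟨c, hc⟩ := hdvd
  rw [hc, norm_mul, PadicInt.norm_p]
  calc (p : ℝ)⁻¹ * ‖c‖ ≤ (p : ℝ)⁻¹ * 1 := by
        apply mul_le_mul_of_nonneg_left (PadicInt.norm_le_one c)
        positivity
    _ = (p : ℝ)⁻¹ := mul_one _

end Padic

section Main
variable {p : ℕ} [hp : Fact p.Prime]

lemma constantCoeff_smul' {K : Type*} [CommRing K] (c : K) (A : PowerSeries K) :
    constantCoeff (c • A) = c * constantCoeff A := by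
  rw [← coeff_zero_eq_constantCoeff_apply, map_smul, smul_eq_mul,
    coeff_zero_eq_constantCoeff_apply]

theorem main_bound (f : PowerSeries ℚ_[p])
    (hf0 : PowerSeries.constantCoeff f = 0)
    (hint : ∀ k : ℕ, ‖PowerSeries.coeff k ((p : ℚ_[p])⁻¹ • substPow p f - f)‖ ≤ 1) :
    ∀ k : ℕ, ‖PowerSeries.coeff k (psExp f)‖ ≤ 1 := by
  have hp2 := hp.out.two_le
  have hppos : 0 < p := hp.out.pos
  have hpQ : (p : ℚ_[p]) ≠ 0 := Nat.cast_ne_zero.mpr hp.out.ne_zero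
  set h : PowerSeries ℚ_[p] := (p : ℚ_[p])⁻¹ • substPow p f - f with hh
  have hh0 : constantCoeff h = 0 := by
    rw [hh, map_sub, constantCoeff_smul', constantCoeff_substPow, hf0]
    simp
  have hph0 : constantCoeff ((p : ℚ_[p]) • h) = 0 := by rw [constantCoeff_smul', hh0, mul_zero]
  have hpf0 : constantCoeff ((p : ℚ_[p]) • f) = 0 := by rw [constantCoeff_smul', hf0, mul_zero]
  have hsubstf : substPow p f = (p : ℚ_[p]) • f + (p : ℚ_[p]) • h := by
    have e : (p : ℚ_[p]) • h = substPow p f - (p : ℚ_[p]) • f := by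
      rw [hh, smul_sub, smul_inv_smul₀ hpQ]
    rw [e, add_comm, sub_add_cancel]
  set G : PowerSeries ℚ_[p] := psExp ((p : ℚ_[p]) • h) with hG
  set F : PowerSeries ℚ_[p] := psExp f with hF
  have hexp : substPow p F = F ^ p * G := by
    rw [hF, ← psExp_substPow hppos hf0, hsubstf, psExp_add hpf0 hph0, hG]
    congr 1
    rw [Nat.cast_smul_eq_nsmul ℚ_[p] p f, psExp_nsmul hf0]
  have hG1 : ∀ m : ℕ, 1 ≤ m → ‖coeff m G‖ ≤ (p : ℝ)⁻¹ := by
    intro m hm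
    rw [hG, coeff_psExp]
    refine IsUltrametricDist.norm_sum_le_of_forall_le_of_nonneg (by positivity) fun j _ => ?_
    rcases Nat.eq_zero_or_pos j with rfl | hj1
    · rw [pow_zero, coeff_one, if_neg (by omega), zero_div, norm_zero]
      positivity
    · rw [smul_pow, map_smul, smul_eq_mul, div_eq_mul_inv]
      have e : (p : ℚ_[p]) ^ j * coeff m (h ^ j) * ((j.factorial : ℚ_[p]))⁻¹ =
          ((p : ℚ_[p]) ^ j * ((j.factorial : ℚ_[p]))⁻¹) * coeff m (h ^ j) := by ring
      rw [e, norm_mul]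
      calc ‖(p : ℚ_[p]) ^ j * ((j.factorial : ℚ_[p]))⁻¹‖ * ‖coeff m (h ^ j)‖
          ≤ (p : ℝ)⁻¹ * 1 := by
            apply mul_le_mul (norm_pow_div_factorial_le hj1) (int_pow hint j m)
              (norm_nonneg _) (by positivity)
        _ = (p : ℝ)⁻¹ := mul_one _
  intro k
  induction k using Nat.strong_induction_on with
  | _ n ih =>
    rcases Nat.eq_zero_or_pos n with rfl | hn
    · rw [coeff_zero_eq_constantCoeff_apply, hF, constantCoeff_psExp, norm_one]
    -- construct integral truncation T of F below n
    set c : ℕ → ℤ_[p] := fun i => if hi : ‖coeff i F‖ ≤ 1 then ⟨coeff i F, hi⟩ else 0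
      with hc
    set Q : Polynomial ℤ_[p] := ∑ i ∈ Finset.range n, Polynomial.C (c i) * Polynomial.X ^ i
      with hQ
    set T : PowerSeries ℚ_[p] := ((Q.map (PadicInt.Coe.ringHom (p := p)) : Polynomial ℚ_[p]) :
      PowerSeries ℚ_[p]) with hT
    have hQcoeff : ∀ i, Q.coeff i = if i ∈ Finset.range n then c i else 0 := by
      intro i
      rw [hQ, Polynomial.finset_sum_coeff]
      rw [Finset.sum_congr rfl fun j _ => by
        rw [Polynomial.coeff_C_mul, Polynomial.coeff_X_pow, mul_ite, mul_one, mul_zero]]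
      exact Finset.sum_ite_eq (Finset.range n) i c
    have hTcoeff : ∀ i, coeff i T = if i < n then coeff i F else 0 := by
      intro i
      rw [hT, Polynomial.coeff_coe, Polynomial.coeff_map, hQcoeff]
      by_cases hi : i < n
      · rw [if_pos (Finset.mem_range.mpr hi), if_pos hi]
        simp only [hc]
        exact congrArg (PadicInt.Coe.ringHom (p := p))
          (dif_pos (ih i hi) : c i = (⟨coeff i F, ih i hi⟩ : ℤ_[p]))
      · rw [if_neg (fun hmem => hi (Finset.mem_range.mp hmem)), if_neg hi, map_zero]
    have hTint : ∀ i, ‖coeff i T‖ ≤ 1 := by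
      intro i
      rw [hTcoeff]
      by_cases hi : i < n
      · rw [if_pos hi]; exact ih i hi
      · rw [if_neg hi, norm_zero]; exact zero_le_one
    have hagree : ∀ u < n, coeff u F = coeff u T := by
      intro u hu
      rw [hTcoeff, if_pos hu]
    set R : PowerSeries ℚ_[p] := F - T with hR
    have hRlow : ∀ v < n, coeff v R = 0 := by
      intro v hv
      rw [hR, map_sub, hagree v hv, sub_self]
    have hRn : coeff n R = coeff n F := by
      rw [hR, map_sub, hTcoeff, if_neg (lt_irrefl n), sub_zero]
    have hTR : T + R = F := by rw [hR, add_sub_cancel]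
    have hT0 : constantCoeff T = 1 := by
      rw [← coeff_zero_eq_constantCoeff_apply, hTcoeff, if_pos hn,
        coeff_zero_eq_constantCoeff_apply, hF, constantCoeff_psExp]
    have hlowpow : ∀ j v, v < j * n → coeff v (R ^ j) = 0 := by
      intro j
      induction j with
      | zero => intro v hv; omega
      | succ j ihj =>
          intro v hv
          rw [pow_succ]
          exact coeff_mul_low ihj hRlow v (by rw [Nat.succ_mul] at hv; omega)
    -- step 1 : coefficient n of the substPow side
    have hstep1 : coeff n (substPow p F) = coeff n (substPow p T) := by
      rw [coeff_substPow, coeff_substPow]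
      by_cases hdp : n % p = 0
      · rw [if_pos hdp, if_pos hdp, hagree _ (Nat.div_lt_self hn hp.out.one_lt)]
      · rw [if_neg hdp, if_neg hdp]
    -- step 2 : coefficient n of F ^ p
    have hstep2 : coeff n (F ^ p) = coeff n (T ^ p) + (p : ℚ_[p]) * coeff n F := by
      have hcoeffnT : coeff n T = 0 := by rw [hTcoeff, if_neg (lt_irrefl n)]
      rw [← hTR, add_pow, map_sum]
      have hterm : ∀ i ∈ Finset.range (p + 1),
          coeff n (T ^ i * R ^ (p - i) * ((p.choose i : ℕ) : PowerSeries ℚ_[p])) =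
          (if i = p then coeff n (T ^ p) else 0) +
          (if i = p - 1 then (p : ℚ_[p]) * coeff n (T + R) else 0) := by
        intro i hi
        rw [Finset.mem_range] at hi
        by_cases hip : i = p
        · subst hip
          rw [if_pos rfl, if_neg (by omega), add_zero, Nat.sub_self, pow_zero, mul_one,
            Nat.choose_self, Nat.cast_one, mul_one]
        · by_cases hip1 : i = p - 1
          · subst hip1
            rw [if_neg hip, if_pos rfl, zero_add]
            have hsub1 : p - (p - 1) = 1 := by omega
            have hchoose : p.choose (p - 1) = p := by
              have hcs := Nat.choose_succ_self_right (p - 1)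
              have hpe : p - 1 + 1 = p := by omega
              rwa [hpe] at hcs
            rw [hsub1, pow_one, hchoose,
              show ((p : ℕ) : PowerSeries ℚ_[p]) = PowerSeries.C ((p : ℕ) : ℚ_[p]) from
                (map_natCast (PowerSeries.C : ℚ_[p] →+* PowerSeries ℚ_[p]) p).symm,
              coeff_mul_C]
            have hTR1 : coeff n (T ^ (p - 1) * R) = coeff n R := by
              rw [coeff_mul]
              have hone : ∀ x ∈ antidiagonal n,
                  coeff x.1 (T ^ (p - 1)) * coeff x.2 R =
                  if x = ((0 : ℕ), n) then coeff n R else 0 := by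
                intro x hx
                rw [Finset.HasAntidiagonal.mem_antidiagonal] at hx
                by_cases hx2 : x.2 = n
                · have hx1 : x.1 = 0 := by omega
                  rw [if_pos (by rw [← hx1, ← hx2]), hx1, hx2,
                    coeff_zero_eq_constantCoeff_apply, map_pow, hT0, one_pow, one_mul]
                · rw [if_neg (by intro hcon; rw [hcon] at hx2; exact hx2 rfl),
                    hRlow x.2 (by omega), mul_zero]
              rw [Finset.sum_congr rfl hone, Finset.sum_ite_eq' (antidiagonal n) ((0 : ℕ), n)
                (fun _ => coeff n R), if_pos (by simp)]
            rw [hTR1]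
            have hcoeffTR : coeff n (T + R) = coeff n R := by
              rw [map_add, hcoeffnT, zero_add]
            rw [hcoeffTR, mul_comm]
          · rw [if_neg hip, if_neg hip1, add_zero]
            have hj2 : 2 ≤ p - i := by omega
            have e : T ^ i * R ^ (p - i) * ((p.choose i : ℕ) : PowerSeries ℚ_[p]) =
                (T ^ i * ((p.choose i : ℕ) : PowerSeries ℚ_[p])) * R ^ (p - i) := by ring
            rw [e]
            refine coeff_mul_low (a := 0) (b := (p - i) * n)
              (fun v hv => absurd hv (by omega)) (hlowpow _) n ?_
            have h2n : 2 * n ≤ (p - i) * n := Nat.mul_le_mul_right n hj2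
            omega
      rw [Finset.sum_congr rfl hterm, Finset.sum_add_distrib,
        Finset.sum_ite_eq' (Finset.range (p + 1)) p (fun _ => coeff n (T ^ p)),
        Finset.sum_ite_eq' (Finset.range (p + 1)) (p - 1)
          (fun _ => (p : ℚ_[p]) * coeff n (T + R)),
        if_pos (Finset.mem_range.mpr (by omega)), if_pos (Finset.mem_range.mpr (by omega)),
        map_add, hcoeffnT, zero_add]
    -- step 3 : expand F^p * G
    have hstep3 : coeff n (F ^ p * G) =
        coeff n (F ^ p) + coeff n (F ^ p * (G - 1)) := by
      rw [← map_add, mul_sub, mul_one, add_sub_cancel]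
    -- step 4 : bound the remainder term
    have hagreepow : ∀ u < n, coeff u (F ^ p) = coeff u (T ^ p) :=
      fun u hu => coeff_pow_agree hagree p u hu
    have hstep4 : ‖coeff n (F ^ p * (G - 1))‖ ≤ (p : ℝ)⁻¹ := by
      rw [coeff_mul]
      refine IsUltrametricDist.norm_sum_le_of_forall_le_of_nonneg (by positivity) fun x hx => ?_
      rw [Finset.HasAntidiagonal.mem_antidiagonal] at hx
      rcases Nat.eq_zero_or_pos x.2 with h2 | h2
      · rw [h2, coeff_zero_eq_constantCoeff_apply, map_sub, map_one, hG, constantCoeff_psExp,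
          sub_self, mul_zero, norm_zero]
        positivity
      · have hu : x.1 < n := by omega
        rw [norm_mul]
        have hb1 : ‖coeff x.1 (F ^ p)‖ ≤ 1 := by
          rw [hagreepow _ hu]
          exact int_pow hTint p x.1
        have hb2 : ‖coeff x.2 (G - 1)‖ ≤ (p : ℝ)⁻¹ := by
          rw [map_sub, coeff_one, if_neg (by omega), sub_zero]
          exact hG1 x.2 h2
        calc ‖coeff x.1 (F ^ p)‖ * ‖coeff x.2 (G - 1)‖ ≤ 1 * (p : ℝ)⁻¹ :=
              mul_le_mul hb1 hb2 (norm_nonneg _) zero_le_one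
          _ = (p : ℝ)⁻¹ := one_mul _
    -- step 5 : Frobenius congruence for T
    have hstep5 : ‖coeff n (substPow p T) - coeff n (T ^ p)‖ ≤ (p : ℝ)⁻¹ := by
      have e1 : substPow p T = (((Polynomial.expand ℤ_[p] p Q).map (PadicInt.Coe.ringHom (p := p)) :
          Polynomial ℚ_[p]) : PowerSeries ℚ_[p]) := by
        rw [hT, substPow_coe_expand hppos, Polynomial.map_expand]
      have e2 : T ^ p = (((Q ^ p).map (PadicInt.Coe.ringHom (p := p)) : Polynomial ℚ_[p]) :
          PowerSeries ℚ_[p]) := by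
        rw [hT, ← Polynomial.coe_pow, Polynomial.map_pow]
      rw [e1, e2, Polynomial.coeff_coe, Polynomial.coeff_coe, Polynomial.coeff_map,
        Polynomial.coeff_map]
      have e3 : (PadicInt.Coe.ringHom (p := p)) ((Polynomial.expand ℤ_[p] p Q).coeff n) -
          (PadicInt.Coe.ringHom (p := p)) ((Q ^ p).coeff n) =
          (PadicInt.Coe.ringHom (p := p)) (((Polynomial.expand ℤ_[p] p Q) - Q ^ p).coeff n) := by
        rw [Polynomial.coeff_sub, map_sub]
      rw [e3]
      have e4 : ‖(PadicInt.Coe.ringHom (p := p)) (((Polynomial.expand ℤ_[p] p Q) - Q ^ p).coeff n)‖ =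
          ‖((Polynomial.expand ℤ_[p] p Q) - Q ^ p).coeff n‖ := PadicInt.norm_def.symm
      rw [e4]
      have e5 : (Polynomial.expand ℤ_[p] p Q) - Q ^ p = -(Q ^ p - Polynomial.expand ℤ_[p] p Q) := by
        ring
      rw [e5, Polynomial.coeff_neg, norm_neg]
      exact frob_poly Q n
    -- combine everything
    have hkey : (p : ℚ_[p]) * coeff n F =
        (coeff n (substPow p T) - coeff n (T ^ p)) -
          coeff n (F ^ p * (G - 1)) := by
      have hmain := congrArg (coeff n) hexp
      rw [hstep1, hstep3, hstep2] at hmain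
      linear_combination -hmain
    have hfinal : ‖(p : ℚ_[p]) * coeff n F‖ ≤ (p : ℝ)⁻¹ := by
      rw [hkey, sub_eq_add_neg]
      refine le_trans (Padic.nonarchimedean _ _) (max_le hstep5 ?_)
      rw [norm_neg]
      exact hstep4
    rw [norm_mul, Padic.norm_p] at hfinal
    have hppos' : (0 : ℝ) < (p : ℝ)⁻¹ := by positivity
    nlinarith [hfinal, hppos']

end Main

end S13
end

/-- corollary of Dieudonné's lemma: if `f ∈ zℚ_p[[z]]` and
`(1/p)·f(z^p) − f(z) ∈ zℤ_p[[z]]`, then `exp(f) ∈ 1 + zℤ_p[[z]]`. -/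
theorem statement13 (p : ℕ) [Fact p.Prime]
    (f : PowerSeries ℚ_[p])
    -- `f ∈ zℚ_p[[z]]`
    (hf0 : PowerSeries.constantCoeff f = 0)
    -- `(1/p)·f(z^p) − f(z) ∈ zℤ_p[[z]]`
    (hint : ∀ k : ℕ,
      ‖PowerSeries.coeff k ((p : ℚ_[p])⁻¹ • substPow p f - f)‖ ≤ 1) :
    -- `exp(f) ∈ 1 + zℤ_p[[z]]`
    PowerSeries.constantCoeff (psExp f) = 1 ∧
    ∀ k : ℕ, ‖PowerSeries.coeff k (psExp f)‖ ≤ 1 := by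
  exact ⟨S13.constantCoeff_psExp f, S13.main_bound f hf0 hint⟩
end

section
/- Let p be a prime number and let L be a monic differential operator of MUM type of order n with coefficients in ℚ_p[[z]], with companion matrix A and uniform part Y_L. Suppose L has a p-integral Frobenius structure Φ = (φ_{i,j})_{1≤i,j≤n}. Then Φ·Y_L(z^p) = Y_L·Φ(0), and Φ(0) is an upper triangular matrix whose diagonal entries are φ_{1,1}(0), p·φ_{1,1}(0), p^2·φ_{1,1}(0), …, p^{n−1}·φ_{1,1}(0). -/
open PowerSeries

noncomputable section Aux

variable {K : Type*} [CommRing K]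

@[simp] lemma coeff_deltaOp (k : ℕ) (f : PowerSeries K) :
    coeff k (deltaOp f) = (k : K) * coeff k f := by
  simp [deltaOp]

lemma deltaOp_add (f g : PowerSeries K) : deltaOp (f + g) = deltaOp f + deltaOp g := by
  ext k; simp [mul_add]

lemma deltaOp_mul (f g : PowerSeries K) :
    deltaOp (f * g) = deltaOp f * g + f * deltaOp g := by
  ext k
  simp only [coeff_deltaOp, map_add, coeff_mul, Finset.mul_sum]
  rw [← Finset.sum_add_distrib]
  refine Finset.sum_congr rfl ?_
  rintro ⟨u, v⟩ huv
  have h : u + v = k := Finset.HasAntidiagonal.mem_antidiagonal.mp huv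
  subst h
  push_cast
  ring

@[simp] lemma deltaOp_C (c : K) : deltaOp (C c) = 0 := by
  ext k
  simp only [coeff_deltaOp, PowerSeries.coeff_C, map_zero]
  rcases eq_or_ne k 0 with rfl | h
  · simp
  · simp [h]

lemma coeff_substPow (m k : ℕ) (f : PowerSeries K) :
    coeff k (substPow m f) = if k % m = 0 then coeff (k / m) f else 0 := by
  simp [substPow]

lemma substPow_C (m : ℕ) (hm : 0 < m) (c : K) : substPow m (C c) = C c := by
  ext k
  rw [coeff_substPow]
  rcases eq_or_ne k 0 with rfl | hk
  · simp
  · rcases Nat.eq_zero_or_pos (k % m) with h | h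
    · have hkm : k / m ≠ 0 := by
        intro h0
        have hlt : k < m := ((Nat.div_eq_zero_iff).mp h0).resolve_left (by omega)
        rw [Nat.mod_eq_of_lt hlt] at h
        exact hk h
      simp [h, PowerSeries.coeff_C, hk, hkm]
    · have : ¬ (k % m = 0) := by omega
      simp [this, PowerSeries.coeff_C, hk]

lemma substPow_add (m : ℕ) (f g : PowerSeries K) :
    substPow m (f + g) = substPow m f + substPow m g := by
  ext k
  simp only [coeff_substPow, map_add]
  split <;> simp

lemma substPow_one (m : ℕ) (hm : 0 < m) : substPow m (1 : PowerSeries K) = 1 := by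
  have h := substPow_C m hm (1 : K)
  simpa using h

lemma substPow_mul (m : ℕ) (hm : 0 < m) (f g : PowerSeries K) :
    substPow m (f * g) = substPow m f * substPow m g := by
  ext k
  rw [coeff_substPow, coeff_mul, coeff_mul]
  simp only [coeff_substPow]
  by_cases hk : k % m = 0
  · rw [if_pos hk]
    have hdvd : m ∣ k := Nat.dvd_of_mod_eq_zero hk
    rw [← Finset.sum_subset
      (Finset.filter_subset (fun ab : ℕ × ℕ => ab.1 % m = 0) (Finset.HasAntidiagonal.antidiagonal k))
      (by
        rintro ⟨u, v⟩ hmem hnot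
        simp only [Finset.mem_filter, hmem, true_and] at hnot
        simp [hnot])]
    refine Finset.sum_nbij' (i := fun uv : ℕ × ℕ => (uv.1 * m, uv.2 * m))
      (j := fun ab : ℕ × ℕ => (ab.1 / m, ab.2 / m)) ?_ ?_ ?_ ?_ ?_
    · rintro ⟨u, v⟩ hmem
      have h : u + v = k / m := Finset.HasAntidiagonal.mem_antidiagonal.mp hmem
      simp only [Finset.mem_filter, Finset.HasAntidiagonal.mem_antidiagonal]
      constructor
      · rw [← add_mul, h, Nat.div_mul_cancel hdvd]
      · simp [Nat.mul_mod_left]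
    · rintro ⟨u, v⟩ hmem
      simp only [Finset.mem_filter, Finset.HasAntidiagonal.mem_antidiagonal] at hmem
      obtain ⟨h, hu⟩ := hmem
      have hud : m ∣ u := Nat.dvd_of_mod_eq_zero hu
      have hvd : m ∣ v := (Nat.dvd_add_right hud).mp (h ▸ hdvd)
      simp only [Finset.HasAntidiagonal.mem_antidiagonal]
      rw [← Nat.add_div_of_dvd_right hud, h]
    · rintro ⟨u, v⟩ hmem
      have h : u + v = k / m := Finset.HasAntidiagonal.mem_antidiagonal.mp hmem
      simp [Nat.mul_div_cancel _ hm]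
    · rintro ⟨u, v⟩ hmem
      simp only [Finset.mem_filter, Finset.HasAntidiagonal.mem_antidiagonal] at hmem
      obtain ⟨h, hu⟩ := hmem
      have hud : m ∣ u := Nat.dvd_of_mod_eq_zero hu
      have hvd : m ∣ v := (Nat.dvd_add_right hud).mp (h ▸ hdvd)
      simp [Nat.div_mul_cancel hud, Nat.div_mul_cancel hvd]
    · rintro ⟨u, v⟩ hmem
      simp [Nat.mul_mod_left, Nat.mul_div_cancel _ hm]
  · rw [if_neg hk]
    refine (Finset.sum_eq_zero ?_).symm
    rintro ⟨u, v⟩ hmem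
    have h : u + v = k := Finset.HasAntidiagonal.mem_antidiagonal.mp hmem
    by_cases hu : u % m = 0
    · have hv : ¬ (v % m = 0) := by
        intro hv
        exact hk (by rw [← h, Nat.add_mod, hu, hv]; simp)
      simp [hv]
    · simp [hu]

lemma deltaOp_substPow (m : ℕ) (f : PowerSeries K) :
    deltaOp (substPow m f) = (m : K) • substPow m (deltaOp f) := by
  ext k
  simp only [coeff_deltaOp, coeff_substPow, map_smul, smul_eq_mul]
  by_cases hk : k % m = 0
  · have h2 : m * (k / m) = k := Nat.mul_div_cancel' (Nat.dvd_of_mod_eq_zero hk)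
    rw [if_pos hk, if_pos hk, ← mul_assoc, ← Nat.cast_mul, h2]
  · simp [hk]


section scalarlemmas
variable {K : Type*} [Field K] {n : ℕ}

lemma sum_shiftL (m : ℕ) (M : Fin n → K) :
    (∑ l : Fin n, (if (l : ℕ) = m then (1:K) else 0) * M l) =
      if h : m < n then M ⟨m, h⟩ else 0 := by
  split
  case isTrue h =>
    rw [Finset.sum_eq_single ⟨m, h⟩]
    · simp
    · intro l _ hl
      have hne : (l:ℕ) ≠ m := fun he => hl (Fin.ext he)
      simp [hne]
    · simp
  case isFalse h =>
    apply Finset.sum_eq_zero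
    intro l _
    have hl := l.isLt
    have hne : (l:ℕ) ≠ m := by omega
    simp [hne]

lemma sum_shiftR (m : ℕ) (M : Fin n → K) :
    (∑ l : Fin n, M l * (if m = (l : ℕ) + 1 then (1:K) else 0)) =
      if h : 0 < m ∧ m - 1 < n then M ⟨m - 1, h.2⟩ else 0 := by
  split
  case isTrue h =>
    rw [Finset.sum_eq_single ⟨m - 1, h.2⟩]
    · have : m = (m - 1) + 1 := by omega
      simp [← this]
    · intro l _ hl
      have hne : ¬ (m = (l:ℕ) + 1) := by
        intro he
        apply hl
        apply Fin.ext
        simp [he]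
      simp [hne]
    · simp
  case isFalse h =>
    apply Finset.sum_eq_zero
    intro l _
    have hl := l.isLt
    have hne : ¬ (m = (l:ℕ) + 1) := by omega
    simp [hne]

def NqM (K : Type*) [Field K] (n : ℕ) : Matrix (Fin n) (Fin n) K :=
  Matrix.of fun i j => if (j : ℕ) = (i : ℕ) + 1 then 1 else 0

lemma NqM_mul_apply (d : Matrix (Fin n) (Fin n) K) (i j : Fin n) :
    (NqM K n * d) i j =
      if h : (i : ℕ) + 1 < n then d ⟨(i : ℕ) + 1, h⟩ j else 0 := by
  rw [Matrix.mul_apply]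
  exact sum_shiftL ((i : ℕ) + 1) (fun l => d l j)

lemma mul_NqM_apply (d : Matrix (Fin n) (Fin n) K) (i j : Fin n) :
    (d * NqM K n) i j =
      if h : 0 < (j : ℕ) ∧ (j : ℕ) - 1 < n then d i ⟨(j : ℕ) - 1, h.2⟩ else 0 := by
  rw [Matrix.mul_apply]
  exact sum_shiftR (j : ℕ) (fun l => d i l)

lemma matrix_rel_zero (q c : K) (hc : c ≠ 0) (d : Matrix (Fin n) (Fin n) K)
    (h : c • d = NqM K n * d - q • (d * NqM K n)) : d = 0 := by
  have key : ∀ m : ℕ, ∀ i j : Fin n, (n - 1 - (i : ℕ)) + (j : ℕ) = m → d i j = 0 := by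
    intro m
    induction m using Nat.strong_induction_on with
    | _ m IH =>
      intro i j hm
      have hi := i.isLt
      have hj := j.isLt
      have he : c * d i j = (NqM K n * d) i j - q * (d * NqM K n) i j := by
        have := congrFun (congrFun h i) j
        simpa [Matrix.sub_apply, Matrix.smul_apply, smul_eq_mul] using this
      rw [NqM_mul_apply, mul_NqM_apply] at he
      have h1 : (if h' : (i : ℕ) + 1 < n then d ⟨(i : ℕ) + 1, h'⟩ j else 0) = 0 := by
        split
        case isTrue h' => exact IH ((n - 1 - ((i:ℕ)+1)) + (j:ℕ)) (by omega) _ _ rfl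
        case isFalse _ => rfl
      have h2 : (if h' : 0 < (j : ℕ) ∧ (j : ℕ) - 1 < n
          then d i ⟨(j : ℕ) - 1, h'.2⟩ else 0) = 0 := by
        split
        case isTrue h' => exact IH ((n - 1 - (i:ℕ)) + ((j:ℕ) - 1)) (by omega) _ _ rfl
        case isFalse _ => rfl
      rw [h1, h2] at he
      simp only [mul_zero, sub_zero] at he
      exact (mul_eq_zero.mp he).resolve_left hc
  ext i j
  exact key _ i j rfl

lemma tri_of_rel (q : K) (c : Matrix (Fin n) (Fin n) K)
    (h : NqM K n * c = q • (c * NqM K n)) :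
    ∀ i j : Fin n, (j : ℕ) < (i : ℕ) → c i j = 0 := by
  have he : ∀ i j : Fin n,
      (if h' : (i : ℕ) + 1 < n then c ⟨(i : ℕ) + 1, h'⟩ j else 0) =
      q * (if h' : 0 < (j : ℕ) ∧ (j : ℕ) - 1 < n then c i ⟨(j : ℕ) - 1, h'.2⟩ else 0) := by
    intro i j
    rw [← NqM_mul_apply, ← mul_NqM_apply, h, Matrix.smul_apply, smul_eq_mul]
  have key : ∀ m : ℕ, ∀ i j : Fin n, (j : ℕ) = m → (j : ℕ) < (i : ℕ) → c i j = 0 := by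
    intro m
    induction m using Nat.strong_induction_on with
    | _ m IH =>
      intro i j hm hji
      have hi := i.isLt
      have hj := j.isLt
      have h1 : 0 < (i : ℕ) := by omega
      have hprev : (i : ℕ) - 1 + 1 < n := by omega
      have heq := he ⟨(i : ℕ) - 1, by omega⟩ j
      rw [dif_pos (by simpa using hprev)] at heq
      have hieq : (⟨(i:ℕ) - 1 + 1, by simpa using hprev⟩ : Fin n) = i := Fin.ext (by simp; omega)
      rw [hieq] at heq
      rw [heq]
      by_cases hjpos : 0 < (j : ℕ)
      · rw [dif_pos ⟨hjpos, by omega⟩]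
        rw [IH ((j:ℕ) - 1) (by omega) _ _ rfl (by simp; omega)]
        ring
      · rw [dif_neg (by simp [hjpos])]
        ring
  intro i j hji
  exact key _ i j rfl hji

lemma diag_of_rel (hn : 0 < n) (q : K) (c : Matrix (Fin n) (Fin n) K)
    (h : NqM K n * c = q • (c * NqM K n)) :
    ∀ i : Fin n, c i i = q ^ (i : ℕ) * c ⟨0, hn⟩ ⟨0, hn⟩ := by
  have he : ∀ i j : Fin n,
      (if h' : (i : ℕ) + 1 < n then c ⟨(i : ℕ) + 1, h'⟩ j else 0) =
      q * (if h' : 0 < (j : ℕ) ∧ (j : ℕ) - 1 < n then c i ⟨(j : ℕ) - 1, h'.2⟩ else 0) := by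
    intro i j
    rw [← NqM_mul_apply, ← mul_NqM_apply, h, Matrix.smul_apply, smul_eq_mul]
  have key : ∀ m : ℕ, ∀ i : Fin n, (i : ℕ) = m → c i i = q ^ (i : ℕ) * c ⟨0, hn⟩ ⟨0, hn⟩ := by
    intro m
    induction m using Nat.strong_induction_on with
    | _ m IH =>
      intro i hm
      have hi := i.isLt
      rcases Nat.eq_zero_or_pos (i : ℕ) with h0 | h1
      · have : i = ⟨0, hn⟩ := Fin.ext (by simp [h0])
        rw [this]
        simp
      · have hprev : (i : ℕ) - 1 + 1 < n := by omega
        have heq := he ⟨(i : ℕ) - 1, by omega⟩ i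
        rw [dif_pos (by simpa using hprev)] at heq
        have hieq : (⟨(i:ℕ) - 1 + 1, by simpa using hprev⟩ : Fin n) = i := Fin.ext (by simp; omega)
        rw [hieq] at heq
        rw [heq, dif_pos ⟨h1, by omega⟩]
        have hiprev : (⟨(i:ℕ) - 1, by omega⟩ : Fin n) = ⟨(i:ℕ) - 1, by omega⟩ := rfl
        rw [IH ((i:ℕ) - 1) (by omega) _ rfl]
        rw [← mul_assoc, ← pow_succ']
        congr 2
        simp
        omega
  intro i
  exact key _ i rfl
end scalarlemmas


section morelemmas
variable {K : Type*} [CommRing K] {n : ℕ}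

lemma deltaOp_zero : deltaOp (0 : PowerSeries K) = 0 := by
  ext k; simp [deltaOp]

def deltaHom (K : Type*) [CommRing K] : PowerSeries K →+ PowerSeries K :=
  AddMonoidHom.mk' deltaOp deltaOp_add

lemma deltaOp_sub (f g : PowerSeries K) : deltaOp (f - g) = deltaOp f - deltaOp g :=
  map_sub (deltaHom K) f g

lemma substPow_zero (m : ℕ) : substPow m (0 : PowerSeries K) = 0 := by
  ext k
  rw [coeff_substPow]
  split <;> simp

def substPowHom (K : Type*) [CommRing K] (m : ℕ) (hm : 0 < m) :
    PowerSeries K →+* PowerSeries K where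
  toFun := substPow m
  map_one' := substPow_one m hm
  map_mul' := substPow_mul m hm
  map_zero' := substPow_zero m
  map_add' := substPow_add m

lemma coe_substPowHom (m : ℕ) (hm : 0 < m) : ⇑(substPowHom K m hm) = substPow m := rfl

lemma constantCoeff_deltaOp (f : PowerSeries K) :
    PowerSeries.constantCoeff (deltaOp f) = 0 := by
  have h : PowerSeries.constantCoeff (deltaOp f) = PowerSeries.coeff 0 (deltaOp f) :=
    (PowerSeries.coeff_zero_eq_constantCoeff_apply _).symm
  rw [h, coeff_deltaOp]
  simp

lemma constantCoeff_substPow (m : ℕ) (f : PowerSeries K) :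
    PowerSeries.constantCoeff (substPow m f) = PowerSeries.constantCoeff f := by
  have h : PowerSeries.constantCoeff (substPow m f) = PowerSeries.coeff 0 (substPow m f) :=
    (PowerSeries.coeff_zero_eq_constantCoeff_apply _).symm
  rw [h, coeff_substPow]
  simp

lemma deltaOp_sum {ι : Type*} (s : Finset ι) (f : ι → PowerSeries K) :
    deltaOp (∑ i ∈ s, f i) = ∑ i ∈ s, deltaOp (f i) := by
  ext k
  simp only [coeff_deltaOp, map_sum, Finset.mul_sum]

lemma mapDelta_mul (M N : Matrix (Fin n) (Fin n) (PowerSeries K)) :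
    (M * N).map deltaOp = M.map deltaOp * N + M * N.map deltaOp := by
  refine Matrix.ext fun i j => ?_
  simp only [Matrix.map_apply, Matrix.add_apply, Matrix.mul_apply]
  rw [deltaOp_sum (K := K) Finset.univ (fun l => M i l * N l j)]
  rw [← Finset.sum_add_distrib]
  exact Finset.sum_congr rfl fun l _ => deltaOp_mul _ _

lemma mapDelta_sub (M N : Matrix (Fin n) (Fin n) (PowerSeries K)) :
    (M - N).map deltaOp = M.map deltaOp - N.map deltaOp :=
  Matrix.map_sub deltaOp deltaOp_sub M N

lemma mapDelta_evalZero (M : Matrix (Fin n) (Fin n) (PowerSeries K)) :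
    (evalZero M).map deltaOp = 0 := by
  refine Matrix.ext fun i j => ?_
  simp [evalZero, Matrix.map_apply]

end morelemmas

section matrixsubst
variable {K : Type*} [CommRing K] {n : ℕ}

lemma substPow_sub (m : ℕ) (f g : PowerSeries K) :
    substPow m (f - g) = substPow m f - substPow m g := by
  ext k
  simp only [coeff_substPow, map_sub]
  split <;> simp

lemma matrix_substPow_mul {m : ℕ} (hm : 0 < m) (M N : Matrix (Fin n) (Fin n) (PowerSeries K)) :
    (M * N).map (substPow m) = M.map (substPow m) * N.map (substPow m) := by
  have h := Matrix.map_mul (L := M) (M := N) (f := substPowHom K m hm)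
  simpa [coe_substPowHom] using h

lemma matrix_substPow_sub (m : ℕ) (M N : Matrix (Fin n) (Fin n) (PowerSeries K)) :
    (M - N).map (substPow m) = M.map (substPow m) - N.map (substPow m) :=
  Matrix.map_sub (substPow m) (substPow_sub m) M N

end matrixsubst

end Aux

/-- for a MUM operator with a `p`-integral Frobenius structure `Φ`,
`Φ·Y_L(z^p) = Y_L·Φ(0)`, and `Φ(0)` is upper triangular with diagonal
`φ_{1,1}(0), p·φ_{1,1}(0), …, p^{n−1}·φ_{1,1}(0)`. -/
theorem statement14 (p : ℕ) [Fact p.Prime] (n : ℕ) (hn : 0 < n)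
    (a : Fin n → PowerSeries ℚ_[p])
    -- `L` is of MUM type
    (hMUM : ∀ i, PowerSeries.constantCoeff (a i) = 0)
    -- `Y` is the uniform part of `L`
    (Y : Matrix (Fin n) (Fin n) (PowerSeries ℚ_[p]))
    (hY0 : evalZero Y = 1)
    (hYeq : Y.map deltaOp = companionM a * Y - Y * evalZero (companionM a))
    -- `Φ` is a `p`-integral Frobenius structure for `L`
    (Φ : Matrix (Fin n) (Fin n) (PowerSeries ℚ_[p])) (hΦ : IsPIntFrob p a Φ) :
    -- `Φ·Y(z^p) = Y·Φ(0)`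
    Φ * Y.map (substPow p) = Y * evalZero Φ ∧
    -- `Φ(0)` is upper triangular
    (∀ i j : Fin n, (j : ℕ) < (i : ℕ) → PowerSeries.constantCoeff (Φ i j) = 0) ∧
    -- its diagonal entries are `p^i·φ_{1,1}(0)`
    (∀ i : Fin n, PowerSeries.constantCoeff (Φ i i) =
      (p : ℚ_[p]) ^ (i : ℕ) * PowerSeries.constantCoeff (Φ ⟨0, hn⟩ ⟨0, hn⟩)) := by
  obtain ⟨hint, hdet, hfrob⟩ := hΦ
  have hp : 0 < p := (Fact.out (p := p.Prime)).pos
  -- constant coefficients of the companion matrix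
  have hA0 : ∀ i j : Fin n, PowerSeries.constantCoeff (companionM a i j)
      = NqM ℚ_[p] n i j := by
    intro i j
    have hj := j.isLt
    simp only [companionM, NqM, Matrix.of_apply]
    by_cases h1 : (i : ℕ) + 1 = n
    · have h2 : ¬ ((j : ℕ) = (i : ℕ) + 1) := by omega
      simp [h1, hMUM]
      omega
    · by_cases h2 : (j : ℕ) = (i : ℕ) + 1
      · simp [h1, h2]
      · simp [h1, h2]
  have hNm : evalZero (companionM a) = (NqM ℚ_[p] n).map (PowerSeries.C) := by
    refine Matrix.ext fun i j => ?_
    simp only [evalZero, Matrix.map_apply, hA0]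
  set cphi : Matrix (Fin n) (Fin n) ℚ_[p] :=
    Matrix.of fun i j => PowerSeries.constantCoeff (Φ i j) with hcphi
  have hCF : evalZero Φ = cphi.map (PowerSeries.C) := by
    refine Matrix.ext fun i j => ?_
    rfl
  -- constant-term relation N c = p c N
  have hNC : NqM ℚ_[p] n * cphi = (p : ℚ_[p]) • (cphi * NqM ℚ_[p] n) := by
    refine Matrix.ext fun i j => ?_
    have h0 := congrArg (PowerSeries.constantCoeff) (congrFun (congrFun hfrob i) j)
    have e0 : PowerSeries.constantCoeff ((Φ.map deltaOp) i j) = 0 := by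
      rw [Matrix.map_apply]; exact constantCoeff_deltaOp _
    have e1 : PowerSeries.constantCoeff ((companionM a * Φ) i j)
        = (NqM ℚ_[p] n * cphi) i j := by
      simp only [Matrix.mul_apply, map_sum, map_mul, hA0]
      rfl
    have e2 : PowerSeries.constantCoeff ((Φ * (companionM a).map (substPow p)) i j)
        = (cphi * NqM ℚ_[p] n) i j := by
      simp only [Matrix.mul_apply, map_sum, map_mul, Matrix.map_apply, constantCoeff_substPow,
        hA0]
      rfl
    rw [Matrix.sub_apply, map_sub, e0, e1, Matrix.smul_apply] at h0
    rw [show ((p : ℚ_[p]) • (Φ * (companionM a).map (substPow p)) i j)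
        = PowerSeries.C (p : ℚ_[p]) * ((Φ * (companionM a).map (substPow p)) i j) from
      PowerSeries.smul_eq_C_mul _ _, map_mul, PowerSeries.constantCoeff_C, e2] at h0
    have := sub_eq_zero.mp h0.symm
    rw [this, Matrix.smul_apply, smul_eq_mul]
  -- power-series level relation
  set Nm : Matrix (Fin n) (Fin n) (PowerSeries ℚ_[p]) :=
    (NqM ℚ_[p] n).map (PowerSeries.C) with hNmdef
  have hNCps : Nm * evalZero Φ = (p : ℚ_[p]) • (evalZero Φ * Nm) := by
    rw [hCF, hNmdef, ← Matrix.map_mul, ← Matrix.map_mul, hNC]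
    refine Matrix.ext fun i j => ?_
    simp only [Matrix.map_apply, Matrix.smul_apply, smul_eq_mul]
    rw [map_mul, PowerSeries.smul_eq_C_mul]
  -- the uniform part of L, twisted
  set A := companionM a with hAdef
  set Yp := Y.map (substPow p) with hYpdef
  set CF := evalZero Φ with hCFdef
  set D := Φ * Yp - Y * CF with hDdef
  rw [hNm] at hYeq
  have hNmsub : Nm.map (substPow p) = Nm := by
    refine Matrix.ext fun i j => ?_
    simp only [hNmdef, Matrix.map_apply]
    exact substPow_C p hp _
  have hdYp : Yp.map deltaOp = (p : ℚ_[p]) • (A.map (substPow p) * Yp - Yp * Nm) := by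
    have e1 : Yp.map deltaOp = (p : ℚ_[p]) • ((Y.map deltaOp).map (substPow p)) := by
      refine Matrix.ext fun i j => ?_
      simp only [hYpdef, Matrix.map_apply, Matrix.smul_apply]
      exact deltaOp_substPow p (Y i j)
    rw [e1, hYeq, matrix_substPow_sub, matrix_substPow_mul hp, matrix_substPow_mul hp, hNmsub]
  have hCFdelta : CF.map deltaOp = 0 := mapDelta_evalZero Φ
  have hdD : D.map deltaOp = A * D - (p : ℚ_[p]) • (D * Nm) := by
    rw [hDdef, mapDelta_sub, mapDelta_mul, mapDelta_mul, hfrob, hYeq, hdYp, hCFdelta]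
    have hYNC : Y * (Nm * CF) = (p : ℚ_[p]) • (Y * (CF * Nm)) := by
      rw [hNCps, mul_smul_comm]
    simp only [mul_zero, add_zero, sub_mul, mul_sub, smul_sub, mul_smul_comm, smul_mul_assoc,
      mul_add, add_mul, mul_assoc]
    rw [hYNC]
    abel
  -- coefficients of D vanish
  have hY0' : ∀ i j : Fin n, PowerSeries.constantCoeff (Y i j)
      = if i = j then 1 else 0 := by
    intro i j
    have h := congrArg (PowerSeries.constantCoeff) (congrFun (congrFun hY0 i) j)
    simp only [evalZero, Matrix.map_apply, PowerSeries.constantCoeff_C, Matrix.one_apply] at h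
    rw [h]
    split <;> simp
  have hDcoeff : ∀ k : ℕ, ∀ i j : Fin n, PowerSeries.coeff k (D i j) = 0 := by
    intro k
    induction k using Nat.strong_induction_on with
    | _ k IH =>
      rcases Nat.eq_zero_or_pos k with rfl | hk
      · intro i j
        rw [PowerSeries.coeff_zero_eq_constantCoeff_apply, hDdef, Matrix.sub_apply, map_sub]
        have e1 : PowerSeries.constantCoeff ((Φ * Yp) i j) = cphi i j := by
          simp only [Matrix.mul_apply, map_sum, map_mul, hYpdef, Matrix.map_apply,
            constantCoeff_substPow, hY0']
          rw [Finset.sum_congr rfl (fun l _ => by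
            rw [show ((if l = j then (1:ℚ_[p]) else 0)) = (if l = j then 1 else 0) from rfl])]
          simp [Finset.sum_ite_eq]
          rfl
        have e2 : PowerSeries.constantCoeff ((Y * CF) i j) = cphi i j := by
          simp only [Matrix.mul_apply, map_sum, map_mul, hCFdef, evalZero, Matrix.map_apply,
            PowerSeries.constantCoeff_C, hY0']
          simp [Finset.sum_ite_eq]
          rfl
        rw [e1, e2, sub_self]
      · intro i j
        set d : Matrix (Fin n) (Fin n) ℚ_[p] :=
          Matrix.of fun i j => PowerSeries.coeff k (D i j) with hd
        have hrel : (k : ℚ_[p]) • d = NqM ℚ_[p] n * d - (p : ℚ_[p]) • (d * NqM ℚ_[p] n) := by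
          refine Matrix.ext fun i j => ?_
          have h := congrArg (PowerSeries.coeff k) (congrFun (congrFun hdD i) j)
          rw [Matrix.map_apply, coeff_deltaOp] at h
          have hAD : PowerSeries.coeff k ((A * D) i j)
              = ∑ l, NqM ℚ_[p] n i l * PowerSeries.coeff k (D l j) := by
            simp only [Matrix.mul_apply, map_sum]
            refine Finset.sum_congr rfl fun l _ => ?_
            rw [PowerSeries.coeff_mul, Finset.sum_eq_single (0, k)]
            · rw [PowerSeries.coeff_zero_eq_constantCoeff_apply, hA0]
            · rintro ⟨u, v⟩ huv hne
              have huvk : u + v = k := Finset.HasAntidiagonal.mem_antidiagonal.mp huv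
              have hv : v < k := by
                rcases Nat.eq_zero_or_pos u with rfl | hu
                · exact absurd (by simp [huvk.symm]) hne
                · omega
              rw [IH v hv l j, mul_zero]
            · intro hnotmem
              exact absurd (Finset.HasAntidiagonal.mem_antidiagonal.mpr (by simp)) hnotmem
          have hDN : PowerSeries.coeff k ((D * Nm) i j)
              = ∑ l, PowerSeries.coeff k (D i l) * NqM ℚ_[p] n l j := by
            simp only [Matrix.mul_apply, map_sum, hNmdef, Matrix.map_apply,
              PowerSeries.coeff_mul_C]
          rw [Matrix.sub_apply, map_sub, hAD, Matrix.smul_apply,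
            PowerSeries.smul_eq_C_mul, PowerSeries.coeff_C_mul, hDN] at h
          simp only [Matrix.smul_apply, Matrix.sub_apply, Matrix.mul_apply, smul_eq_mul, hd,
            Matrix.of_apply]
          exact h
        have hkne : (k : ℚ_[p]) ≠ 0 := Nat.cast_ne_zero.mpr (by omega)
        have hzero := matrix_rel_zero (p : ℚ_[p]) (k : ℚ_[p]) hkne d hrel
        have := congrFun (congrFun hzero i) j
        simpa [hd] using this
  have hDzero : D = 0 := by
    refine Matrix.ext fun i j => ?_
    ext k
    simp [hDcoeff k i j]
  have h1 : Φ * Yp = Y * CF := sub_eq_zero.mp (by rw [← hDdef]; exact hDzero)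
  refine ⟨h1, ?_, ?_⟩
  · intro i j hji
    have h := tri_of_rel (p : ℚ_[p]) cphi hNC i j hji
    simpa [hcphi] using h
  · intro i
    have h := diag_of_rel hn (p : ℚ_[p]) cphi hNC i
    simpa [hcphi] using h
end
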